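/- Let L and M be integers with 1 ≤ L < M and let A = {L, L+1, …, M}. Then for every n ∈ ℕ, W_A(n) = II if and only if n mod (L+M) ∈ {0, 1, 2, …, L−1}. -/

import Mathlib

/-- Standard NIM winner for the one-pile subtraction game with move set `A`:
`nimW A n = true` means Player I (the player to move) wins with `n` stones;
`nimW A n = false` means Player II wins.  (For `A` consisting of positive
integers this is exactly: Player I wins iff some `a ∈ A` with `a ≤ n` moves to
a Player-II-win position `n - a`.) -/
def nimW (A : Finset ℕ) : ℕ → Bool
  | n =>
    decide (((A.filter fun a => 0 < a ∧ a ≤ n).attach.filter (fun a =>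
      nimW A (n - a.1) = false)).Nonempty)
decreasing_by
  all_goals
    have h := a.2
    simp only [Finset.mem_filter] at h
    omega

lemma nimW_true_iff (A : Finset ℕ) (n : ℕ) :
    nimW A n = true ↔ ∃ a ∈ A, 0 < a ∧ a ≤ n ∧ nimW A (n - a) = false := by
  rw [nimW, decide_eq_true_iff]
  simp [Finset.Nonempty, Finset.mem_filter]
  tauto

lemma nimW_false_iff (A : Finset ℕ) (n : ℕ) :
    nimW A n = false ↔ ∀ a ∈ A, 0 < a → a ≤ n → nimW A (n - a) = true := by
  rw [← Bool.not_eq_true, nimW_true_iff]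
  push_neg
  simp

/-- For `1 ≤ L < M` and `A = {L, L+1, …, M}`,
Player II wins standard NIM with `n` stones iff `n mod (L+M) ∈ {0, 1, …, L-1}`. -/
theorem nim_Icc_winCondition (L M : ℕ) (hL : 1 ≤ L) (hLM : L < M) (n : ℕ) :
    nimW (Finset.Icc L M) n = false ↔ n % (L + M) < L := by
  induction n using Nat.strong_induction_on with
  | _ n ih =>
    constructor
    · intro hfalse
      by_contra hr
      push_neg at hr
      set r := n % (L + M) with hrdef
      have hrlt : r < L + M := Nat.mod_lt _ (by omega)
      set a := max L (r - L + 1) with hadef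
      have haL : L ≤ a := le_max_left _ _
      have haM : a ≤ M := by omega
      have har : a ≤ r := by omega
      have hrn : r ≤ n := Nat.mod_le _ _
      have han : a ≤ n := le_trans har hrn
      have hmod : (n - a) % (L + M) = r - a := by
        have : n - a = (L + M) * (n / (L + M)) + (r - a) := by
          have := Nat.div_add_mod n (L + M)
          omega
        rw [this, Nat.mul_add_mod]
        exact Nat.mod_eq_of_lt (by omega)
      rw [nimW_false_iff] at hfalse
      have := hfalse a (Finset.mem_Icc.mpr ⟨haL, haM⟩) (by omega) han
      have hlt := (ih (n - a) (by omega)).mpr (by rw [hmod]; omega)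
      rw [this] at hlt
      exact absurd hlt (by simp)
    · intro hr
      rw [nimW_false_iff]
      intro a ha hapos han
      rw [Finset.mem_Icc] at ha
      set r := n % (L + M) with hrdef
      have hd : L + M ≤ n := by
        by_contra h
        push_neg at h
        have : n % (L + M) = n := Nat.mod_eq_of_lt h
        omega
      obtain ⟨q', hq'⟩ : ∃ q', n / (L + M) = q' + 1 :=
        ⟨n / (L + M) - 1, by
          have := (Nat.one_le_div_iff (show 0 < L + M by omega)).mpr hd
          omega⟩
      have hq := Nat.div_add_mod n (L + M)
      rw [hq'] at hq
      have hmul : (L + M) * (q' + 1) = (L + M) * q' + (L + M) := by ring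
      have hmod : (n - a) % (L + M) = L + M + r - a := by
        have heq : n - a = (L + M) * q' + (L + M + r - a) := by omega
        rw [heq, Nat.mul_add_mod]
        exact Nat.mod_eq_of_lt (by omega)
      by_contra htrue
      rw [Bool.not_eq_true] at htrue
      have := (ih (n - a) (by omega)).mp htrue
      omega
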